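/- (Optimality condition for the symmetric channel) Let W : X → S(H) be a symmetric classical-quantum channel, i.e. W_x = V^{x-1} W_1 (V†)^{x-1} where V is unitary with V^{|X|} = 1. Then for the uniform distribution U on X and every α ∈ (0,1], Tr[W_x^α (U W^α)^{(1-α)/α}] = Tr[(U W^α)^{1/α}] for all x ∈ X, where U W^α := (1/|X|) Σ_x W_x^α. Consequently the uniform distribution maximizes the Gallager function E_0(s,P) for every s ≥ 0. -/

import Mathlib

open Matrix Polynomial
open scoped BigOperators ComplexOrder

noncomputable section

variable {n : Type*} [Fintype n] [DecidableEq n]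

/-- Apply a real function spectrally to a Hermitian matrix (junk value `0` otherwise). -/
def specFun (f : ℝ → ℝ) (A : Matrix n n ℂ) : Matrix n n ℂ :=
  if hA : A.IsHermitian then
    (hA.eigenvectorUnitary : Matrix n n ℂ) *
      Matrix.diagonal (fun i => ((f (hA.eigenvalues i) : ℝ) : ℂ)) *
      star (hA.eigenvectorUnitary : Matrix n n ℂ)
  else 0

/-- Spectral real power of a matrix (`0 ^ α = 0` for `α ∈ (0,1)` via `Real.rpow`). -/
def mPow (A : Matrix n n ℂ) (α : ℝ) : Matrix n n ℂ := specFun (fun x => x ^ α) A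

/-- Density matrices: positive semidefinite with unit trace. -/
def IsDensity (A : Matrix n n ℂ) : Prop := A.PosSemidef ∧ A.trace = 1

/-- Gallager's auxiliary function `E₀(s,P) = -log Tr[(Σ_x P(x) W_x^{1/(1+s)})^{1+s}]`. -/
def gallagerE0 {d : ℕ} {X : Type*} [Fintype X] (W : X → Matrix (Fin d) (Fin d) ℂ)
    (s : ℝ) (P : X → ℝ) : ℝ :=
  -Real.log (((mPow (∑ x, ((P x : ℝ) : ℂ) • mPow (W x) (1 / (1 + s))) (1 + s)).trace).re)

def dC (l : n → ℝ) : Matrix n n ℂ := Matrix.diagonal (fun i => ((l i : ℝ) : ℂ))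

lemma dC_herm (l : n → ℝ) : (dC l)ᴴ = dC l := by
  simp [dC, Matrix.diagonal_conjTranspose, Pi.star_def, Complex.conj_ofReal]

lemma herm_of_decomp {A U : Matrix n n ℂ} {l : n → ℝ}
    (hA : A = U * dC l * star U) : A.IsHermitian := by
  rw [hA]
  show (U * dC l * star U)ᴴ = _
  simp only [star_eq_conjTranspose, conjTranspose_mul, conjTranspose_conjTranspose, dC_herm,
    Matrix.mul_assoc]


/-- conjugation by a unitary as an algebra hom -/
def conjAH (U : Matrix n n ℂ) (h1 : U * star U = 1) (h2 : star U * U = 1) :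
    Matrix n n ℂ →ₐ[ℂ] Matrix n n ℂ where
  toFun M := U * M * star U
  map_one' := by show U * 1 * star U = 1; rw [mul_one, h1]
  map_mul' M N := by
    show U * (M * N) * star U = U * M * star U * (U * N * star U)
    have : U * M * star U * (U * N * star U) = U * M * (star U * U) * (N * star U) := by
      simp only [Matrix.mul_assoc]
    rw [this, h2, mul_one]; simp only [Matrix.mul_assoc]
  map_zero' := by simp
  map_add' M N := by simp [Matrix.add_mul, Matrix.mul_add]
  commutes' r := by
    show U * algebraMap ℂ (Matrix n n ℂ) r * star U = _
    simp only [Algebra.algebraMap_eq_smul_one, Matrix.mul_smul, Matrix.smul_mul, mul_one, h1]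

/-- diagonal as an algebra hom -/
def diagAH : (n → ℂ) →ₐ[ℂ] Matrix n n ℂ :=
  { Matrix.diagonalRingHom n ℂ with
    commutes' := fun r => by
      show Matrix.diagonal _ = _
      simp [Algebra.algebraMap_eq_smul_one, Matrix.smul_eq_diagonal_mul] }

lemma aeval_conj (U : Matrix n n ℂ) (h1 : U * star U = 1) (h2 : star U * U = 1)
    (M : Matrix n n ℂ) (p : ℂ[X]) :
    aeval (U * M * star U) p = U * aeval M p * star U :=
  (aeval_algHom_apply (conjAH U h1 h2) M p)

lemma aeval_diagonal (c : n → ℂ) (p : ℂ[X]) :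
    aeval (Matrix.diagonal c) p = Matrix.diagonal (fun i => eval (c i) p) := by
  have h := aeval_algHom_apply (diagAH (n := n)) c p
  have h2 : ∀ i, aeval c p i = eval (c i) p := by
    intro i
    have := aeval_algHom_apply (Pi.evalAlgHom ℂ (fun _ : n => ℂ) i) c p
    simpa using this
  show aeval (diagAH c) p = _
  rw [h]
  show Matrix.diagonal (aeval c p) = _
  rw [funext h2]

lemma eval_map_real (q : ℝ[X]) (r : ℝ) :
    eval ((r : ℂ)) (q.map (algebraMap ℝ ℂ)) = ((eval r q : ℝ) : ℂ) := by
  rw [eval_map]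
  exact eval₂_at_apply (algebraMap ℝ ℂ) r

lemma aeval_of_decomp {A U : Matrix n n ℂ} {l : n → ℝ}
    (h1 : U * star U = 1) (h2 : star U * U = 1)
    (hA : A = U * dC l * star U) (q : ℝ[X]) :
    aeval A (q.map (algebraMap ℝ ℂ)) = U * dC (fun i => eval (l i) q) * star U := by
  rw [hA]
  unfold dC
  rw [aeval_conj U h1 h2, aeval_diagonal]
  have : (fun i => eval ((l i : ℂ)) (q.map (algebraMap ℝ ℂ))) = fun i => ((eval (l i) q : ℝ) : ℂ) := by
    funext i; exact eval_map_real q (l i)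
  rw [this]

lemma specFun_decomp {A U : Matrix n n ℂ} {l : n → ℝ} (f : ℝ → ℝ)
    (h1 : U * star U = 1) (h2 : star U * U = 1)
    (hA : A = U * dC l * star U) :
    specFun f A = U * dC (fun i => f (l i)) * star U := by
  have hherm : A.IsHermitian := herm_of_decomp hA
  have hU0 : (hherm.eigenvectorUnitary : Matrix n n ℂ) * star (hherm.eigenvectorUnitary : Matrix n n ℂ) = 1 :=
    Matrix.mem_unitaryGroup_iff.mp (hherm.eigenvectorUnitary).2
  have hU0' : star (hherm.eigenvectorUnitary : Matrix n n ℂ) * (hherm.eigenvectorUnitary : Matrix n n ℂ) = 1 :=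
    Matrix.mem_unitaryGroup_iff'.mp (hherm.eigenvectorUnitary).2
  have hspec : A = (hherm.eigenvectorUnitary : Matrix n n ℂ) * dC hherm.eigenvalues *
      star (hherm.eigenvectorUnitary : Matrix n n ℂ) := hherm.spectral_theorem
  -- interpolation polynomial
  set S : Finset ℝ := (Finset.univ.image l) ∪ (Finset.univ.image hherm.eigenvalues) with hS
  set q : ℝ[X] := Lagrange.interpolate S id f with hq
  have hinj : Set.InjOn id (S : Set ℝ) := Function.injective_id.injOn
  have hevalq : ∀ r ∈ S, eval r q = f r := fun r hr =>
    Lagrange.eval_interpolate_at_node f hinj hr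
  have e1 := aeval_of_decomp h1 h2 hA q
  have e2 := aeval_of_decomp hU0 hU0' hspec q
  have hfl : (fun i => eval (l i) q) = fun i => f (l i) := by
    funext i
    exact hevalq _ (Finset.mem_union_left _ (Finset.mem_image_of_mem l (Finset.mem_univ i)))
  have hfm : (fun i => eval (hherm.eigenvalues i) q) = fun i => f (hherm.eigenvalues i) := by
    funext i
    exact hevalq _ (Finset.mem_union_right _ (Finset.mem_image_of_mem _ (Finset.mem_univ i)))
  have key : (hherm.eigenvectorUnitary : Matrix n n ℂ) * dC (fun i => f (hherm.eigenvalues i)) *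
      star (hherm.eigenvectorUnitary : Matrix n n ℂ) = U * dC (fun i => f (l i)) * star U := by
    rw [← hfl, ← hfm, ← e1, ← e2]
  rw [specFun, dif_pos hherm, ← key]
  rfl

lemma specFun_conj {A : Matrix n n ℂ} (hA : A.IsHermitian) (f : ℝ → ℝ)
    {V : Matrix n n ℂ} (hV1 : V * star V = 1) (hV2 : star V * V = 1) :
    specFun f (V * A * star V) = V * specFun f A * star V := by
  have hU0 : (hA.eigenvectorUnitary : Matrix n n ℂ) * star (hA.eigenvectorUnitary : Matrix n n ℂ) = 1 :=
    Matrix.mem_unitaryGroup_iff.mp (hA.eigenvectorUnitary).2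
  have hU0' : star (hA.eigenvectorUnitary : Matrix n n ℂ) * (hA.eigenvectorUnitary : Matrix n n ℂ) = 1 :=
    Matrix.mem_unitaryGroup_iff'.mp (hA.eigenvectorUnitary).2
  have hspec : A = (hA.eigenvectorUnitary : Matrix n n ℂ) * dC hA.eigenvalues *
      star (hA.eigenvectorUnitary : Matrix n n ℂ) := hA.spectral_theorem
  set U := (hA.eigenvectorUnitary : Matrix n n ℂ)
  have h1 : (V * U) * star (V * U) = 1 := by
    rw [StarMul.star_mul]
    calc V * U * (star U * star V) = V * (U * star U) * star V := by
          simp only [Matrix.mul_assoc]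
      _ = 1 := by rw [hU0, mul_one, hV1]
  have h2 : star (V * U) * (V * U) = 1 := by
    rw [StarMul.star_mul]
    calc star U * star V * (V * U) = star U * (star V * V) * U := by
          simp only [Matrix.mul_assoc]
      _ = 1 := by rw [hV2, mul_one, hU0']
  have hdecomp : V * A * star V = (V * U) * dC hA.eigenvalues * star (V * U) := by
    rw [StarMul.star_mul]
    conv_lhs => rw [hspec]
    simp only [Matrix.mul_assoc]
  rw [specFun_decomp f h1 h2 hdecomp, specFun_decomp f hU0 hU0' hspec, StarMul.star_mul]
  simp only [Matrix.mul_assoc]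

lemma trace_of_decomp {A U : Matrix n n ℂ} {l : n → ℝ}
    (h2 : star U * U = 1) (hA : A = U * dC l * star U) :
    A.trace = ((∑ i, l i : ℝ) : ℂ) := by
  rw [hA, Matrix.trace_mul_cycle, h2, one_mul]
  unfold dC
  rw [Matrix.trace_diagonal]
  push_cast
  rfl

lemma psd_of_decomp {A U : Matrix n n ℂ} {l : n → ℝ}
    (hA : A = U * dC l * star U) (hl : ∀ i, 0 ≤ l i) : A.PosSemidef := by
  rw [hA]
  have hD : (dC l).PosSemidef := by
    unfold dC
    exact Matrix.posSemidef_diagonal_iff.mpr fun i => Complex.zero_le_real.mpr (hl i)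
  simpa [Matrix.star_eq_conjTranspose] using hD.mul_mul_conjTranspose_same U

lemma exists_decomp_psd {A : Matrix n n ℂ} (hA : A.PosSemidef) :
    ∃ (U : Matrix n n ℂ) (l : n → ℝ), U * star U = 1 ∧ star U * U = 1 ∧
      A = U * dC l * star U ∧ ∀ i, 0 ≤ l i := by
  refine ⟨hA.1.eigenvectorUnitary, hA.1.eigenvalues,
    Matrix.mem_unitaryGroup_iff.mp (hA.1.eigenvectorUnitary).2,
    Matrix.mem_unitaryGroup_iff'.mp (hA.1.eigenvectorUnitary).2,
    hA.1.spectral_theorem, fun i => hA.eigenvalues_nonneg i⟩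


lemma mPow_decomp {A U : Matrix n n ℂ} {l : n → ℝ} (α : ℝ)
    (h1 : U * star U = 1) (h2 : star U * U = 1) (hA : A = U * dC l * star U) :
    mPow A α = U * dC (fun i => l i ^ α) * star U :=
  specFun_decomp _ h1 h2 hA

lemma trace_mPow_re_of_decomp {A U : Matrix n n ℂ} {l : n → ℝ} (α : ℝ)
    (h1 : U * star U = 1) (h2 : star U * U = 1) (hA : A = U * dC l * star U) :
    ((mPow A α).trace).re = ∑ i, l i ^ α := by
  rw [trace_of_decomp h2 (mPow_decomp α h1 h2 hA), Complex.ofReal_re]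

lemma entry_re (T : Matrix n n ℂ) (ν : n → ℝ) (i : n) :
    ((star T * dC ν * T) i i).re = ∑ j, ν j * Complex.normSq (T j i) := by
  have : (star T * dC ν * T) i i = ∑ j, (ν j : ℂ) * ((starRingEnd ℂ) (T j i) * T j i) := by
    rw [Matrix.mul_apply]
    congr 1
    funext j
    unfold dC
    rw [Matrix.mul_diagonal]
    simp only [Matrix.star_apply, Complex.star_def]
    ring
  rw [this, Complex.re_sum]
  congr 1
  funext j
  rw [mul_comm ((starRingEnd ℂ) (T j i)) (T j i), Complex.mul_conj]
  rw [← Complex.ofReal_mul, Complex.ofReal_re]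

lemma col_sums (T : Matrix n n ℂ) (h2 : star T * T = 1) (i : n) :
    ∑ j, Complex.normSq (T j i) = 1 := by
  have : (star T * T) i i = (1 : Matrix n n ℂ) i i := by rw [h2]
  rw [Matrix.mul_apply, Matrix.one_apply_eq] at this
  have h3 : ∑ j, ((Complex.normSq (T j i) : ℝ) : ℂ) = 1 := by
    rw [← this]
    congr 1
    funext j
    rw [Matrix.star_apply, Complex.star_def, mul_comm, Complex.mul_conj]
  have := congrArg Complex.re h3
  rw [Complex.re_sum] at this
  simpa using this

lemma row_sums (T : Matrix n n ℂ) (h1 : T * star T = 1) (j : n) :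
    ∑ i, Complex.normSq (T j i) = 1 := by
  have : (T * star T) j j = (1 : Matrix n n ℂ) j j := by rw [h1]
  rw [Matrix.mul_apply, Matrix.one_apply_eq] at this
  have h3 : ∑ i, ((Complex.normSq (T j i) : ℝ) : ℂ) = 1 := by
    rw [← this]
    congr 1
    funext i
    rw [Matrix.star_apply, Complex.star_def, Complex.mul_conj]
  have := congrArg Complex.re h3
  rw [Complex.re_sum] at this
  simpa using this

lemma re_ofReal_mul (w : ℝ) (z : ℂ) : ((w : ℂ) * z).re = w * z.re := by
  simp [Complex.mul_re]

lemma traceJensen {K : Type*} [Fintype K] (w : K → ℝ) (hw : ∀ k, 0 ≤ w k)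
    (hw1 : ∑ k, w k = 1) (B : K → Matrix n n ℂ) (hB : ∀ k, (B k).PosSemidef)
    {p : ℝ} (hp : 1 ≤ p) :
    ((mPow (∑ k, ((w k : ℝ) : ℂ) • B k) p).trace).re ≤
      ∑ k, w k * ((mPow (B k) p).trace).re := by
  classical
  set M := ∑ k, ((w k : ℝ) : ℂ) • B k with hM
  have hMherm : M.IsHermitian := by
    show Mᴴ = M
    rw [hM, Matrix.conjTranspose_sum]
    congr 1
    funext k
    rw [Matrix.conjTranspose_smul, (hB k).1.eq, Complex.star_def, Complex.conj_ofReal]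
  set U := (hMherm.eigenvectorUnitary : Matrix n n ℂ) with hUdef
  have hU1 : U * star U = 1 := Matrix.mem_unitaryGroup_iff.mp (hMherm.eigenvectorUnitary).2
  have hU2 : star U * U = 1 := Matrix.mem_unitaryGroup_iff'.mp (hMherm.eigenvectorUnitary).2
  set μ := hMherm.eigenvalues with hμdef
  have hspec : M = U * dC μ * star U := hMherm.spectral_theorem
  -- choose decompositions for each B k
  choose V ν hV1 hV2 hBdecomp hνnn using fun k => exists_decomp_psd (hB k)
  set T : K → Matrix n n ℂ := fun k => star (V k) * U with hTdef
  have hT2 : ∀ k, star (T k) * T k = 1 := by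
    intro k
    show star (star (V k) * U) * (star (V k) * U) = 1
    rw [StarMul.star_mul, star_star]
    calc star U * V k * (star (V k) * U) = star U * (V k * star (V k)) * U := by
          simp only [Matrix.mul_assoc]
      _ = 1 := by rw [hV1, mul_one, hU2]
  have hT1 : ∀ k, T k * star (T k) = 1 := by
    intro k
    show (star (V k) * U) * star (star (V k) * U) = 1
    rw [StarMul.star_mul, star_star]
    calc star (V k) * U * (star U * V k) = star (V k) * (U * star U) * V k := by
          simp only [Matrix.mul_assoc]
      _ = 1 := by rw [hU1, mul_one, hV2]
  -- express conjugated B k entries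
  have hconj : ∀ k, star U * B k * U = star (T k) * dC (ν k) * T k := by
    intro k
    rw [hBdecomp k]
    show star U * (V k * dC (ν k) * star (V k)) * U = star (star (V k) * U) * dC (ν k) * (star (V k) * U)
    rw [StarMul.star_mul, star_star]
    simp only [Matrix.mul_assoc]
  set r : K → n → ℝ := fun k i => ∑ j, ν k j * Complex.normSq (T k j i) with hrdef
  have hrnn : ∀ k i, 0 ≤ r k i := fun k i =>
    Finset.sum_nonneg fun j _ => mul_nonneg (hνnn k j) (Complex.normSq_nonneg _)
  -- μ i = ∑ k, w k * r k i
  have hμeq : ∀ i, μ i = ∑ k, w k * r k i := by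
    intro i
    have hdiag : dC μ = star U * M * U := by
      rw [hspec]
      symm
      calc star U * (U * dC μ * star U) * U = (star U * U) * dC μ * (star U * U) := by
            simp only [Matrix.mul_assoc]
        _ = dC μ := by rw [hU2, one_mul, mul_one]
    have h1 : ((μ i : ℝ) : ℂ) = (star U * M * U) i i := by
      rw [← hdiag]; simp [dC]
    have h2 : (star U * M * U) i i = ∑ k, ((w k : ℝ) : ℂ) * ((star U * B k * U) i i) := by
      rw [hM, Finset.mul_sum, Finset.sum_mul]
      rw [Matrix.sum_apply]
      congr 1
      funext k
      rw [Matrix.mul_smul, Matrix.smul_mul, Matrix.smul_apply, smul_eq_mul]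
    have h3 := congrArg Complex.re (h1.trans h2)
    rw [Complex.ofReal_re, Complex.re_sum] at h3
    rw [h3]
    congr 1
    funext k
    rw [re_ofReal_mul, hconj k, entry_re]
  -- trace formulas
  have hLHS : ((mPow M p).trace).re = ∑ i, (μ i) ^ p :=
    trace_mPow_re_of_decomp p hU1 hU2 hspec
  have hRHS : ∀ k, ((mPow (B k) p).trace).re = ∑ j, (ν k j) ^ p := fun k =>
    trace_mPow_re_of_decomp p (hV1 k) (hV2 k) (hBdecomp k)
  rw [hLHS]
  have step1 : ∀ i, (μ i) ^ p ≤ ∑ k, w k * (r k i) ^ p := by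
    intro i
    have := (convexOn_rpow hp).map_sum_le (t := Finset.univ) (w := w) (p := fun k => r k i)
      (fun k _ => hw k) hw1 (fun k _ => hrnn k i)
    simpa only [smul_eq_mul, ← hμeq i] using this
  have step2 : ∀ k, ∑ i, (r k i) ^ p ≤ ∑ j, (ν k j) ^ p := by
    intro k
    have jensen : ∀ i, (r k i) ^ p ≤ ∑ j, Complex.normSq (T k j i) * (ν k j) ^ p := by
      intro i
      have := (convexOn_rpow hp).map_sum_le (t := Finset.univ)
        (w := fun j => Complex.normSq (T k j i)) (p := fun j => ν k j)
        (fun j _ => Complex.normSq_nonneg _) (col_sums (T k) (hT2 k) i)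
        (fun j _ => hνnn k j)
      simp only [smul_eq_mul] at this
      have hri : r k i = ∑ j, Complex.normSq (T k j i) * ν k j := by
        rw [hrdef]
        exact Finset.sum_congr rfl fun j _ => mul_comm _ _
      rw [hri]
      exact this
    calc ∑ i, (r k i) ^ p ≤ ∑ i, ∑ j, Complex.normSq (T k j i) * (ν k j) ^ p :=
          Finset.sum_le_sum fun i _ => jensen i
      _ = ∑ j, (∑ i, Complex.normSq (T k j i)) * (ν k j) ^ p := by
          rw [Finset.sum_comm]
          exact Finset.sum_congr rfl fun j _ => (Finset.sum_mul _ _ _).symm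
      _ = ∑ j, (ν k j) ^ p := by
          refine Finset.sum_congr rfl fun j _ => ?_
          rw [row_sums (T k) (hT1 k) j, one_mul]
  calc ∑ i, (μ i) ^ p ≤ ∑ i, ∑ k, w k * (r k i) ^ p := Finset.sum_le_sum fun i _ => step1 i
    _ = ∑ k, w k * ∑ i, (r k i) ^ p := by
        rw [Finset.sum_comm]
        exact Finset.sum_congr rfl fun k _ => (Finset.mul_sum _ _ _).symm
    _ ≤ ∑ k, w k * ((mPow (B k) p).trace).re := by
        refine Finset.sum_le_sum fun k _ => ?_
        rw [hRHS k]
        exact mul_le_mul_of_nonneg_left (step2 k) (hw k)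

lemma mPow_psd {A : Matrix n n ℂ} (hA : A.PosSemidef) (α : ℝ) : (mPow A α).PosSemidef := by
  obtain ⟨U, l, h1, h2, hdec, hl⟩ := exists_decomp_psd hA
  exact psd_of_decomp (mPow_decomp α h1 h2 hdec) fun i => Real.rpow_nonneg (hl i) α

lemma psd_smul {A : Matrix n n ℂ} (hA : A.PosSemidef) {c : ℝ} (hc : 0 ≤ c) :
    (((c : ℝ) : ℂ) • A).PosSemidef := by
  constructor
  · show (_ : Matrix n n ℂ)ᴴ = _
    rw [Matrix.conjTranspose_smul, hA.1.eq, Complex.star_def, Complex.conj_ofReal]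
  · intro x
    exact (hA.smul (Complex.zero_le_real.mpr hc)).2 x

lemma psd_sum {K : Type*} [Fintype K] (B : K → Matrix n n ℂ) (hB : ∀ k, (B k).PosSemidef) :
    (∑ k, B k).PosSemidef := by
  classical
  refine Finset.sum_induction B _ (fun a b ha hb => ha.add hb) Matrix.PosSemidef.zero
    fun k _ => hB k

/-- Optimality condition for symmetric classical-quantum channels: for
`W_x = V^x W_0 (V†)^x` with `V` unitary of order `|X|`, the uniform distribution
satisfies `Tr[W_x^α (U W^α)^{(1-α)/α}] = Tr[(U W^α)^{1/α}]` for all `x` and `α ∈ (0,1]`,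
and consequently maximizes Gallager's function `E₀(s,·)` for every `s ≥ 0`. -/
theorem symmetric_channel_uniform_optimal {d m : ℕ} (hm : 0 < m)
    (W : Fin m → Matrix (Fin d) (Fin d) ℂ) (hW : ∀ x, IsDensity (W x))
    (V : Matrix (Fin d) (Fin d) ℂ) (hV : V ∈ Matrix.unitaryGroup (Fin d) ℂ)
    (hVm : V ^ m = 1)
    (hsym : ∀ x : Fin m, W x = V ^ (x : ℕ) * W ⟨0, hm⟩ * (star V) ^ (x : ℕ)) :
    (∀ α ∈ Set.Ioc (0 : ℝ) 1, ∀ x : Fin m,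
      ((mPow (W x) α *
          mPow (((m : ℂ))⁻¹ • ∑ x', mPow (W x') α) ((1 - α) / α)).trace).re =
        ((mPow (((m : ℂ))⁻¹ • ∑ x', mPow (W x') α) (1 / α)).trace).re) ∧
    (∀ s : ℝ, 0 ≤ s → ∀ P : Fin m → ℝ, (∀ x, 0 ≤ P x) → ∑ x, P x = 1 →
      gallagerE0 W s P ≤ gallagerE0 W s (fun _ => (m : ℝ)⁻¹)) := by
  haveI : NeZero m := ⟨hm.ne'⟩
  have hm' : (m : ℂ) ≠ 0 := Nat.cast_ne_zero.mpr hm.ne'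
  have hVk : ∀ k : ℕ, V ^ k ∈ Matrix.unitaryGroup (Fin d) ℂ := fun k => pow_mem hV k
  have hVk1 : ∀ k : ℕ, V ^ k * star (V ^ k) = 1 := fun k =>
    Matrix.mem_unitaryGroup_iff.mp (hVk k)
  have hVk2 : ∀ k : ℕ, star (V ^ k) * V ^ k = 1 := fun k =>
    Matrix.mem_unitaryGroup_iff'.mp (hVk k)
  have hpowmod : ∀ a : ℕ, V ^ (a % m) = V ^ a := by
    intro a
    conv_rhs => rw [← Nat.div_add_mod a m]
    rw [pow_add, pow_mul, hVm, one_pow, one_mul]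
  have hW0herm : (W ⟨0, hm⟩).IsHermitian := (hW _).1.1
  have hmPowW : ∀ (α : ℝ) (x : Fin m),
      mPow (W x) α = V ^ (x : ℕ) * mPow (W ⟨0, hm⟩) α * star (V ^ (x : ℕ)) := by
    intro α x
    have h := specFun_conj hW0herm (fun t => t ^ α) (hVk1 x) (hVk2 x)
    unfold mPow
    rw [← h]
    congr 1
    rw [hsym x, ← star_pow]
  have hshift : ∀ (α : ℝ) (y k : Fin m),
      V ^ (k : ℕ) * mPow (W y) α * star (V ^ (k : ℕ)) = mPow (W (y + k)) α := by
    intro α y k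
    rw [hmPowW α y, hmPowW α (y + k)]
    have hpows : V ^ (k : ℕ) * V ^ (y : ℕ) = V ^ ((y + k : Fin m) : ℕ) := by
      rw [← pow_add, Fin.val_add, hpowmod, Nat.add_comm]
    calc V ^ (k : ℕ) * (V ^ (y : ℕ) * mPow (W ⟨0, hm⟩) α * star (V ^ (y : ℕ))) * star (V ^ (k : ℕ))
        = (V ^ (k : ℕ) * V ^ (y : ℕ)) * mPow (W ⟨0, hm⟩) α *
            star (V ^ (k : ℕ) * V ^ (y : ℕ)) := by
          rw [StarMul.star_mul]
          simp only [Matrix.mul_assoc]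
      _ = _ := by rw [hpows]
  have hconjAk : ∀ (α : ℝ) (k : ℕ),
      V ^ k * ((m : ℂ)⁻¹ • ∑ x', mPow (W x') α) * star (V ^ k)
        = (m : ℂ)⁻¹ • ∑ x', mPow (W x') α := by
    intro α k
    induction k with
    | zero => simp
    | succ k ih =>
      have hstep : V * ((m : ℂ)⁻¹ • ∑ x', mPow (W x') α) * star V
          = (m : ℂ)⁻¹ • ∑ x', mPow (W x') α := by
        rw [Matrix.mul_smul, Matrix.smul_mul]
        congr 1
        rw [Matrix.mul_sum, Matrix.sum_mul]
        have hV1pow : V = V ^ ((1 : Fin m) : ℕ) := by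
          rw [Fin.val_one', hpowmod, pow_one]
        have hterm : ∀ x' : Fin m, V * mPow (W x') α * star V = mPow (W (x' + 1)) α := by
          intro x'
          conv_lhs => rw [hV1pow]
          exact hshift α x' 1
        calc ∑ x', V * mPow (W x') α * star V = ∑ x', mPow (W (x' + 1)) α :=
              Finset.sum_congr rfl fun x' _ => hterm x'
          _ = ∑ x', mPow (W x') α := by
              exact Fintype.sum_equiv (Equiv.addRight (1 : Fin m))
                (fun x' => mPow (W (x' + 1)) α) (fun x' => mPow (W x') α) (fun x' => rfl)
      rw [pow_succ']
      rw [StarMul.star_mul]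
      calc V * V ^ k * ((m : ℂ)⁻¹ • ∑ x', mPow (W x') α) * (star (V ^ k) * star V)
          = V * (V ^ k * ((m : ℂ)⁻¹ • ∑ x', mPow (W x') α) * star (V ^ k)) * star V := by
            simp only [Matrix.mul_assoc]
        _ = _ := by rw [ih, hstep]
  have hconjAk' : ∀ (α : ℝ) (k : ℕ),
      star (V ^ k) * ((m : ℂ)⁻¹ • ∑ x', mPow (W x') α) * V ^ k
        = (m : ℂ)⁻¹ • ∑ x', mPow (W x') α := by
    intro α k
    conv_lhs => rw [← hconjAk α k]
    calc star (V ^ k) * (V ^ k * ((m : ℂ)⁻¹ • ∑ x', mPow (W x') α) * star (V ^ k)) * V ^ k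
        = (star (V ^ k) * V ^ k) * ((m : ℂ)⁻¹ • ∑ x', mPow (W x') α) *
            (star (V ^ k) * V ^ k) := by simp only [Matrix.mul_assoc]
      _ = _ := by rw [hVk2 k, one_mul, mul_one]
  have hAcast : (m : ℂ)⁻¹ = (((m : ℝ)⁻¹ : ℝ) : ℂ) := by push_cast; ring
  have hApsd : ∀ α : ℝ, ((m : ℂ)⁻¹ • ∑ x', mPow (W x') α).PosSemidef := by
    intro α
    rw [hAcast]
    exact psd_smul (psd_sum _ fun x' => mPow_psd (hW x').1 α)
      (inv_nonneg.mpr (Nat.cast_nonneg m))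
  have hmPowAconj : ∀ (α β : ℝ) (k : ℕ),
      star (V ^ k) * mPow ((m : ℂ)⁻¹ • ∑ x', mPow (W x') α) β * V ^ k
        = mPow ((m : ℂ)⁻¹ • ∑ x', mPow (W x') α) β := by
    intro α β k
    have h1 : star (V ^ k) * star (star (V ^ k)) = 1 := by rw [star_star]; exact hVk2 k
    have h2 : star (star (V ^ k)) * star (V ^ k) = 1 := by rw [star_star]; exact hVk1 k
    have h := specFun_conj (hApsd α).1 (fun t => t ^ β) h1 h2
    rw [star_star] at h
    rw [hconjAk' α k] at h
    exact h.symm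
  refine ⟨?_, ?_⟩
  · -- part 1
    intro α hα x
    set A := (m : ℂ)⁻¹ • ∑ x', mPow (W x') α with hAdef
    obtain ⟨UA, μ, hA1, hA2, hAdec, hμ⟩ := exists_decomp_psd (hApsd α)
    rw [← hAdef] at hAdec
    have hα0 : α ≠ 0 := ne_of_gt hα.1
    set β := (1 - α) / α with hβdef
    -- traces are independent of x
    have htconst : ∀ x' : Fin m,
        (mPow (W x') α * mPow A β).trace = (mPow (W ⟨0, hm⟩) α * mPow A β).trace := by
      intro x'
      rw [hmPowW α x']
      have e1 : V ^ (x' : ℕ) * mPow (W ⟨0, hm⟩) α * star (V ^ (x' : ℕ)) * mPow A β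
          = V ^ (x' : ℕ) * (mPow (W ⟨0, hm⟩) α * (star (V ^ (x' : ℕ)) * mPow A β)) := by
        simp only [Matrix.mul_assoc]
      rw [e1, Matrix.trace_mul_comm]
      have e2 : mPow (W ⟨0, hm⟩) α * (star (V ^ (x' : ℕ)) * mPow A β) * V ^ (x' : ℕ)
          = mPow (W ⟨0, hm⟩) α * (star (V ^ (x' : ℕ)) * mPow A β * V ^ (x' : ℕ)) := by
        simp only [Matrix.mul_assoc]
      rw [e2]
      congr 2
      exact hmPowAconj α β (x' : ℕ)
    -- sum of traces
    have hSeq : ∑ x', mPow (W x') α = (m : ℂ) • A := by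
      rw [hAdef]
      rw [smul_smul]
      rw [mul_inv_cancel₀ hm', one_smul]
    have hAmul : A * mPow A β = mPow A (1 / α) := by
      rw [mPow_decomp β hA1 hA2 hAdec, mPow_decomp (1 / α) hA1 hA2 hAdec]
      conv_lhs => rw [hAdec]
      calc UA * dC μ * star UA * (UA * dC (fun i => μ i ^ β) * star UA)
          = UA * (dC μ * (star UA * UA) * dC (fun i => μ i ^ β)) * star UA := by
            simp only [Matrix.mul_assoc]
        _ = UA * (dC μ * dC (fun i => μ i ^ β)) * star UA := by rw [hA2]; rw [mul_one]
        _ = UA * dC (fun i => μ i ^ (1 / α)) * star UA := by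
            have hpt : ∀ i, μ i * μ i ^ β = μ i ^ (1 / α) := by
              intro i
              rcases eq_or_lt_of_le (hμ i) with h0 | hpos
              · rw [← h0, Real.zero_rpow (by positivity : (1:ℝ)/α ≠ 0), zero_mul]
              · have h1a : (1 : ℝ) / α = 1 + β := by
                  rw [hβdef]; field_simp; ring
                rw [h1a, Real.rpow_add hpos, Real.rpow_one]
            have hd : dC μ * dC (fun i => μ i ^ β) = dC (fun i => μ i ^ (1 / α)) := by
              unfold dC
              rw [Matrix.diagonal_mul_diagonal]
              exact congrArg Matrix.diagonal (funext fun i => by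
                rw [← Complex.ofReal_mul, hpt i])
            rw [hd]
    have hsum : ∑ x' : Fin m, (mPow (W x') α * mPow A β).trace
        = (m : ℂ) * (mPow A (1 / α)).trace := by
      calc ∑ x' : Fin m, (mPow (W x') α * mPow A β).trace
          = ((∑ x', mPow (W x') α) * mPow A β).trace := by
            rw [Matrix.sum_mul, Matrix.trace_sum]
        _ = (m : ℂ) * (A * mPow A β).trace := by
            rw [hSeq, Matrix.smul_mul, Matrix.trace_smul, smul_eq_mul]
        _ = _ := by rw [hAmul]
    have hconst : ∑ x' : Fin m, (mPow (W x') α * mPow A β).trace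
        = (m : ℂ) * (mPow (W ⟨0, hm⟩) α * mPow A β).trace := by
      rw [Finset.sum_congr rfl fun x' _ => htconst x', Finset.sum_const, Finset.card_univ,
        Fintype.card_fin, nsmul_eq_mul]
    have hkey : (mPow (W x) α * mPow A β).trace = (mPow A (1 / α)).trace := by
      rw [htconst x]
      exact mul_left_cancel₀ hm' (hconst.symm.trans hsum)
    exact congrArg Complex.re hkey
  · -- part 2
    intro s hs P hP hP1
    have h1s : (0 : ℝ) < 1 + s := by linarith
    have hp : (1 : ℝ) ≤ 1 + s := by linarith
    have hmR : ((m : ℝ)) ≠ 0 := Nat.cast_ne_zero.mpr hm.ne'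
    set B : Fin m → Matrix (Fin d) (Fin d) ℂ := fun x => mPow (W x) (1 / (1 + s)) with hBdef
    have hBpsd : ∀ x, (B x).PosSemidef := fun x => mPow_psd (hW x).1 _
    set MP : Matrix (Fin d) (Fin d) ℂ := ∑ x, ((P x : ℝ) : ℂ) • B x with hMPdef
    have hMPpsd : MP.PosSemidef :=
      psd_sum _ fun x => psd_smul (hBpsd x) (hP x)
    set MU : Matrix (Fin d) (Fin d) ℂ := ∑ x, (((m : ℝ)⁻¹ : ℝ) : ℂ) • B x with hMUdef
    have hMUpsd : MU.PosSemidef :=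
      psd_sum _ fun x => psd_smul (hBpsd x) (inv_nonneg.mpr (Nat.cast_nonneg m))
    set N : Fin m → Matrix (Fin d) (Fin d) ℂ :=
      fun k => star (V ^ (k : ℕ)) * MP * V ^ (k : ℕ) with hNdef
    have hNpsd : ∀ k, (N k).PosSemidef := by
      intro k
      have h := hMPpsd.mul_mul_conjTranspose_same (star (V ^ (k : ℕ)))
      have he : (star (V ^ (k : ℕ)))ᴴ = V ^ (k : ℕ) := star_star _
      rw [he] at h
      exact h
    -- N k = ∑ y, P (y + k) • B y
    have hshiftB : ∀ y k : Fin m, V ^ (k : ℕ) * B y * star (V ^ (k : ℕ)) = B (y + k) :=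
      fun y k => hshift (1 / (1 + s)) y k
    have hconjB : ∀ (k x : Fin m), star (V ^ (k : ℕ)) * B x * V ^ (k : ℕ) = B (x - k) := by
      intro k x
      have h := hshiftB (x - k) k
      rw [sub_add_cancel] at h
      rw [← h]
      calc star (V ^ (k : ℕ)) * (V ^ (k : ℕ) * B (x - k) * star (V ^ (k : ℕ))) * V ^ (k : ℕ)
          = (star (V ^ (k : ℕ)) * V ^ (k : ℕ)) * B (x - k) *
              (star (V ^ (k : ℕ)) * V ^ (k : ℕ)) := by simp only [Matrix.mul_assoc]
        _ = B (x - k) := by rw [hVk2]; rw [one_mul, mul_one]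
    have hNk : ∀ k : Fin m, N k = ∑ y, ((P (y + k) : ℝ) : ℂ) • B y := by
      intro k
      calc N k = ∑ x, ((P x : ℝ) : ℂ) • (star (V ^ (k : ℕ)) * B x * V ^ (k : ℕ)) := by
            show star (V ^ (k : ℕ)) * MP * V ^ (k : ℕ) = _
            rw [hMPdef, Matrix.mul_sum, Matrix.sum_mul]
            refine Finset.sum_congr rfl fun x _ => ?_
            rw [Matrix.mul_smul, Matrix.smul_mul]
        _ = ∑ x, ((P x : ℝ) : ℂ) • B (x - k) := by
            refine Finset.sum_congr rfl fun x _ => ?_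
            rw [hconjB k x]
        _ = ∑ y, ((P (y + k) : ℝ) : ℂ) • B y := by
            refine (Fintype.sum_equiv (Equiv.addRight k)
              (fun y => ((P (y + k) : ℝ) : ℂ) • B y)
              (fun x => ((P x : ℝ) : ℂ) • B (x - k)) fun y => ?_).symm
            simp only [Equiv.coe_addRight, add_sub_cancel_right]
    have hunif : ∑ k : Fin m, (((m : ℝ)⁻¹ : ℝ) : ℂ) • N k = MU := by
      calc ∑ k : Fin m, (((m : ℝ)⁻¹ : ℝ) : ℂ) • N k
          = ∑ k : Fin m, ∑ y, ((((m : ℝ)⁻¹ : ℝ) : ℂ) * ((P (y + k) : ℝ) : ℂ)) • B y := by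
            refine Finset.sum_congr rfl fun k _ => ?_
            rw [hNk k, Finset.smul_sum]
            refine Finset.sum_congr rfl fun y _ => ?_
            rw [smul_smul]
        _ = ∑ y, (∑ k : Fin m, (((m : ℝ)⁻¹ : ℝ) : ℂ) * ((P (y + k) : ℝ) : ℂ)) • B y := by
            rw [Finset.sum_comm]
            exact Finset.sum_congr rfl fun y _ => Finset.sum_smul.symm
        _ = MU := by
            rw [hMUdef]
            refine Finset.sum_congr rfl fun y _ => ?_
            congr 1
            rw [← Finset.mul_sum]
            have hsum1 : ∑ k : Fin m, ((P (y + k) : ℝ) : ℂ) = 1 := by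
              have : ∑ k : Fin m, P (y + k) = 1 := by
                rw [← hP1]
                exact Fintype.sum_equiv (Equiv.addLeft y) (fun k => P (y + k)) P fun k => rfl
              rw [← Complex.ofReal_sum]
              rw [this, Complex.ofReal_one]
            rw [hsum1, mul_one]
    have hw1 : ∑ _k : Fin m, (m : ℝ)⁻¹ = 1 := by
      rw [Finset.sum_const, Finset.card_univ, Fintype.card_fin, nsmul_eq_mul,
        mul_inv_cancel₀ hmR]
    have hjensen := traceJensen (fun _ : Fin m => (m : ℝ)⁻¹)
      (fun _ => inv_nonneg.mpr (Nat.cast_nonneg m)) hw1 N hNpsd hp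
    rw [hunif] at hjensen
    have htraceN : ∀ k : Fin m, ((mPow (N k) (1 + s)).trace).re = ((mPow MP (1 + s)).trace).re := by
      intro k
      have h1' : star (V ^ (k : ℕ)) * star (star (V ^ (k : ℕ))) = 1 := by
        rw [star_star]; exact hVk2 k
      have h2' : star (star (V ^ (k : ℕ))) * star (V ^ (k : ℕ)) = 1 := by
        rw [star_star]; exact hVk1 k
      have h := specFun_conj hMPpsd.1 (fun t => t ^ (1 + s)) h1' h2'
      rw [star_star] at h
      have hmp : mPow (N k) (1 + s) =
          star (V ^ (k : ℕ)) * mPow MP (1 + s) * V ^ (k : ℕ) := by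
        rw [hNdef]
        exact h
      have htr : (mPow (N k) (1 + s)).trace = (mPow MP (1 + s)).trace := by
        rw [hmp, Matrix.trace_mul_cycle, hVk1 k, one_mul]
      exact congrArg Complex.re htr
    have hRHSeq : ∑ k : Fin m, (m : ℝ)⁻¹ * ((mPow (N k) (1 + s)).trace).re
        = ((mPow MP (1 + s)).trace).re := by
      calc ∑ k : Fin m, (m : ℝ)⁻¹ * ((mPow (N k) (1 + s)).trace).re
          = ∑ _k : Fin m, (m : ℝ)⁻¹ * ((mPow MP (1 + s)).trace).re :=
            Finset.sum_congr rfl fun k _ => by rw [htraceN k]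
        _ = _ := by rw [← Finset.sum_mul, hw1, one_mul]
    rw [hRHSeq] at hjensen
    -- positivity of the uniform trace
    obtain ⟨UU, μ, hU1', hU2', hUdec, hμ'⟩ := exists_decomp_psd hMUpsd
    have htU : ((mPow MU (1 + s)).trace).re = ∑ i, μ i ^ (1 + s) :=
      trace_mPow_re_of_decomp (1 + s) hU1' hU2' hUdec
    have htrB : ∀ x : Fin m, 0 < ((B x).trace).re := by
      intro x
      obtain ⟨Ux, lx, hx1, hx2, hxdec, hlx⟩ := exists_decomp_psd (hW x).1
      have htrW : ∑ i, lx i = 1 := by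
        have h := trace_of_decomp hx2 hxdec
        rw [(hW x).2] at h
        exact_mod_cast h.symm
      have hBtr : ((B x).trace).re = ∑ i, lx i ^ (1 / (1 + s)) :=
        trace_mPow_re_of_decomp (1 / (1 + s)) hx1 hx2 hxdec
      rw [hBtr]
      have hex : ∃ i, 0 < lx i := by
        by_contra hc
        push_neg at hc
        have h0 : ∑ i, lx i = 0 :=
          Finset.sum_eq_zero fun i _ => le_antisymm (hc i) (hlx i)
        rw [htrW] at h0
        exact one_ne_zero h0
      obtain ⟨i, hi⟩ := hex
      refine Finset.sum_pos' (fun j _ => Real.rpow_nonneg (hlx j) _) ⟨i, Finset.mem_univ i, ?_⟩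
      exact Real.rpow_pos_of_pos hi _
    have htrMU : (MU.trace).re = ∑ x : Fin m, (m : ℝ)⁻¹ * ((B x).trace).re := by
      rw [hMUdef, Matrix.trace_sum, Complex.re_sum]
      refine Finset.sum_congr rfl fun x _ => ?_
      rw [Matrix.trace_smul, smul_eq_mul, re_ofReal_mul]
    have hMUtrpos : 0 < (MU.trace).re := by
      rw [htrMU]
      refine Finset.sum_pos (fun x _ => mul_pos (by positivity) (htrB x)) ?_
      exact Finset.univ_nonempty
    have hμsum : ∑ i, μ i = (MU.trace).re := by
      have h := trace_of_decomp hU2' hUdec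
      rw [h, Complex.ofReal_re]
    have hexμ : ∃ i, 0 < μ i := by
      by_contra hc
      push_neg at hc
      have h0 : ∑ i, μ i = 0 :=
        Finset.sum_eq_zero fun i _ => le_antisymm (hc i) (hμ' i)
      rw [hμsum] at h0
      exact absurd h0 (ne_of_gt hMUtrpos)
    obtain ⟨i, hi⟩ := hexμ
    have htUpos : 0 < ((mPow MU (1 + s)).trace).re := by
      rw [htU]
      refine Finset.sum_pos' (fun j _ => Real.rpow_nonneg (hμ' j) _)
        ⟨i, Finset.mem_univ i, Real.rpow_pos_of_pos hi _⟩
    unfold gallagerE0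
    apply neg_le_neg
    exact Real.log_le_log htUpos hjensen

end
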